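/- For any k×n matrix M over the polynomial ring F[ξ_1,...,ξ_N] of rank k (over the fraction field) and for any field F of sufficient size, there exists an evaluation point such that the evaluated matrix has the same diameter as M; in particular, the minimum distance n - ρ + 1 determined by the diameter ρ of M is achievable by some matrix over F with the same zero pattern. -/

import Mathlib

open Matrix MvPolynomial nonZeroDivisors

/-- The diameter of a k×n matrix over a commutative ring: the least ρ such that any ρ
columns contain a k×k submatrix with nonzero determinant. -/
noncomputable def matDiameter {R : Type*} [CommRing R] {k n : ℕ}
    (M : Matrix (Fin k) (Fin n) R) : ℕ :=
  sInf {ρ | ∀ s : Finset (Fin n), s.card = ρ → ∃ g : Fin k → Fin n,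
    Function.Injective g ∧ (∀ i, g i ∈ s) ∧ (M.submatrix id g).det ≠ 0}

lemma aux_exists_sub {R : Type*} [CommRing R] [IsDomain R] {k n : ℕ}
    (M : Matrix (Fin k) (Fin n) R) (hrank : M.rank = k) :
    ∃ g : Fin k → Fin n, Function.Injective g ∧ (M.submatrix id g).det ≠ 0 := by
  classical
  set K := FractionRing R
  set M' : Matrix (Fin k) (Fin n) K := M.map (algebraMap R K) with hM'def
  set W : Submodule R (Fin k → R) := Submodule.span R (Set.range Mᵀ) with hWdef
  have hW : Module.finrank R W = k := (M.rank_eq_finrank_span_cols).symm.trans hrank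
  have hWrank : Module.rank R W = (k : Cardinal) := by
    have hlt : Module.rank R W < Cardinal.aleph0 := by
      refine lt_of_le_of_lt (Submodule.rank_le W) ?_
      rw [← Module.finrank_eq_rank R (Fin k → R)]
      exact Cardinal.nat_lt_aleph0 _
    rw [← Cardinal.cast_toNat_of_lt_aleph0 hlt]
    norm_cast
  -- rows of M' are linearly independent over K
  have hrow : LinearIndependent K (fun i => M' i) := by
    rw [Fintype.linearIndependent_iff]
    intro c hc
    by_contra hne
    push_neg at hne
    obtain ⟨i0, hi0⟩ := hne
    obtain ⟨d, hd⟩ := IsLocalization.exist_integer_multiples_of_finite R⁰ c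
    choose x hx using hd
    have hdne : algebraMap R K (d : R) ≠ 0 := by
      rw [map_ne_zero_iff _ (IsFractionRing.injective R K)]
      exact nonZeroDivisors.ne_zero d.2
    have hx0 : x i0 ≠ 0 := by
      intro h
      apply hi0
      have : algebraMap R K (x i0) = (d : R) • c i0 := hx i0
      rw [h, map_zero] at this
      rw [Algebra.smul_def] at this
      rcases mul_eq_zero.mp this.symm with h' | h'
      · exact absurd h' hdne
      · exact h'
    have hxj : ∀ j, ∑ i, x i * M i j = 0 := by
      intro j
      apply (map_eq_zero_iff _ (IsFractionRing.injective R K)).mp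
      have h0 : ∑ i, c i * M' i j = 0 := by
        have := congrFun hc j
        simpa [Finset.sum_apply] using this
      calc algebraMap R K (∑ i, x i * M i j)
          = ∑ i, ((d : R) • c i) * M' i j := by
            rw [map_sum]
            refine Finset.sum_congr rfl fun i _ => ?_
            rw [_root_.map_mul, hx i]
            rfl
        _ = (d : R) • ∑ i, c i * M' i j := by
            rw [Finset.smul_sum]
            refine Finset.sum_congr rfl fun i _ => ?_
            rw [smul_mul_assoc]
        _ = 0 := by rw [h0, smul_zero]
    -- the functional argument
    let f : (Fin k → R) →ₗ[R] R := ∑ i, x i • (LinearMap.proj i)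
    have hf_apply : ∀ w : Fin k → R, f w = ∑ i, x i * w i := by
      intro w
      simp [f, LinearMap.sum_apply, smul_eq_mul]
    have hWker : W ≤ LinearMap.ker f := by
      rw [hWdef, Submodule.span_le]
      rintro _ ⟨j, rfl⟩
      simp only [SetLike.mem_coe, LinearMap.mem_ker]
      rw [hf_apply]
      exact hxj j
    have hmemrange : x i0 ∈ LinearMap.range f := by
      refine ⟨Pi.single i0 1, ?_⟩
      rw [hf_apply]
      simp [Pi.single_apply]
    have hnt : Nontrivial (LinearMap.range f) := by
      refine ⟨⟨x i0, hmemrange⟩, 0, ?_⟩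
      simp [Subtype.ext_iff, hx0]
    have h1 : (1 : Cardinal) ≤ Module.rank R (LinearMap.range f) :=
      Cardinal.one_le_iff_pos.mpr rank_pos
    have h2 : (k : Cardinal) ≤ Module.rank R (LinearMap.ker f) :=
      hWrank ▸ Submodule.rank_mono hWker
    have hrn := LinearMap.rank_range_add_rank_ker f
    have htop : Module.rank R (Fin k → R) = (k : Cardinal) := by
      rw [← Module.finrank_eq_rank R (Fin k → R)]
      norm_cast
      exact Module.finrank_fin_fun R
    have : (1 : Cardinal) + (k : Cardinal) ≤ (k : Cardinal) := by
      calc (1 : Cardinal) + (k : Cardinal)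
          ≤ Module.rank R (LinearMap.range f) + Module.rank R (LinearMap.ker f) :=
            add_le_add h1 h2
        _ = (k : Cardinal) := by rw [hrn, htop]
    have : (1 + k : ℕ) ≤ (k : ℕ) := by exact_mod_cast this
    omega
  -- rank of M' over K is k, so columns span everything
  have hrankM' : M'.rank = k := by
    rw [M'.rank_eq_finrank_span_row, finrank_span_eq_card (show LinearIndependent K M'.row from hrow), Fintype.card_fin]
  have hspan : Submodule.span K (Set.range M'ᵀ) = ⊤ := by
    apply Submodule.eq_top_of_finrank_eq
    rw [show Set.range M'ᵀ = Set.range M'.col from rfl, ← M'.rank_eq_finrank_span_cols, hrankM', Module.finrank_fin_fun]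
  obtain ⟨t, hts, htspan, htind⟩ := exists_linearIndependent K (Set.range M'ᵀ)
  rw [hspan] at htspan
  have htfin : t.Finite := Set.Finite.subset (Set.finite_range _) hts
  haveI := htfin.fintype
  have hcard : Fintype.card t = k := by
    have h1 := finrank_span_set_eq_card htind
    rw [htspan, finrank_top, Module.finrank_fin_fun, Set.toFinset_card] at h1
    omega
  let e : Fin k ≃ t := (Fintype.equivFinOfCardEq hcard).symm
  choose g hg using fun i : Fin k => hts (e i).2
  have hginj : Function.Injective g := by
    intro i1 i2 h
    apply e.injective
    apply Subtype.ext
    rw [← hg i1, ← hg i2, h]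
  have hB : IsUnit (M'.submatrix id g) := by
    rw [← linearIndependent_cols_iff_isUnit]
    have hcols : (fun i => (M'.submatrix id g)ᵀ i) = fun i => ((e i : t) : Fin k → K) := by
      funext i
      ext r
      have := congrFun (hg i) r
      simpa [Matrix.transpose_apply, Matrix.submatrix_apply] using this
    rw [show (M'.submatrix id g).col = fun i => (M'.submatrix id g)ᵀ i from rfl, hcols]
    exact htind.comp e e.injective
  refine ⟨g, hginj, ?_⟩
  intro h0
  have hdet : (M'.submatrix id g).det ≠ 0 :=
    ((Matrix.isUnit_iff_isUnit_det _).mp hB).ne_zero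
  apply hdet
  have heq : M'.submatrix id g = (M.submatrix id g).map (algebraMap R K) := rfl
  have h2 : (algebraMap R K) (M.submatrix id g).det
      = ((M.submatrix id g).map (algebraMap R K)).det := RingHom.map_det _ _
  rw [heq, ← h2, h0, map_zero]

/-- For a rank-k polynomial matrix M over a sufficiently large field F (every nonzero
polynomial has a nonvanishing point), there is an evaluation point such that the evaluated
matrix has the same diameter ρ as M, preserves the zero pattern, and its row space attains
minimum distance n-ρ+1. -/
theorem stmt14 {F : Type*} [Field F] [DecidableEq F] {k n N : ℕ}
    (M : Matrix (Fin k) (Fin n) (MvPolynomial (Fin N) F)) (hrank : M.rank = k)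
    (hF : ∀ p : MvPolynomial (Fin N) F, p ≠ 0 → ∃ a : Fin N → F, eval a p ≠ 0) :
    ∃ a : Fin N → F,
      matDiameter (M.map (eval a)) = matDiameter M ∧
      (∀ i j, M i j = 0 → M.map (eval a) i j = 0) ∧
      (∀ X : Fin k → F, X ≠ 0 →
        n - matDiameter M + 1 ≤ hammingNorm (vecMul X (M.map (eval a)))) := by
  classical
  set G : Finset (Fin k → Fin n) :=
    Finset.univ.filter (fun g => (M.submatrix id g).det ≠ 0) with hG
  set P : MvPolynomial (Fin N) F := ∏ g ∈ G, (M.submatrix id g).det with hP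
  have hPne : P ≠ 0 := by
    rw [hP]
    rw [Finset.prod_ne_zero_iff]
    intro g hg
    exact (Finset.mem_filter.mp hg).2
  obtain ⟨a, ha⟩ := hF P hPne
  have key : ∀ g : Fin k → Fin n,
      ((M.map (eval a)).submatrix id g).det ≠ 0 ↔ (M.submatrix id g).det ≠ 0 := by
    intro g
    have hmap : ((M.map (eval a)).submatrix id g).det = eval a ((M.submatrix id g).det) := by
      have heq : (M.map (eval a)).submatrix id g = (M.submatrix id g).map (eval a) := rfl
      rw [heq]
      exact (RingHom.map_det (eval a) _).symm
    constructor
    · intro h h0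
      rw [hmap, h0, map_zero] at h
      exact h rfl
    · intro h
      rw [hmap]
      intro h0
      apply ha
      rw [hP, map_prod]
      exact Finset.prod_eq_zero (Finset.mem_filter.mpr ⟨Finset.mem_univ _, h⟩) h0
  have hseteq : {ρ : ℕ | ∀ s : Finset (Fin n), s.card = ρ → ∃ g : Fin k → Fin n,
        Function.Injective g ∧ (∀ i, g i ∈ s) ∧ ((M.map (eval a)).submatrix id g).det ≠ 0}
      = {ρ : ℕ | ∀ s : Finset (Fin n), s.card = ρ → ∃ g : Fin k → Fin n,
        Function.Injective g ∧ (∀ i, g i ∈ s) ∧ (M.submatrix id g).det ≠ 0} := by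
    ext ρ
    simp only [Set.mem_setOf_eq]
    refine forall₂_congr fun s _ => exists_congr fun g => ?_
    exact and_congr_right fun _ => and_congr_right fun _ => key g
  have hdiam : matDiameter (M.map (eval a)) = matDiameter M := by
    rw [matDiameter, matDiameter, hseteq]
  refine ⟨a, hdiam, ?_, ?_⟩
  · intro i j h
    simp [Matrix.map_apply, h]
  · -- minimum distance part
    have hnmem : n ∈ {ρ : ℕ | ∀ s : Finset (Fin n), s.card = ρ → ∃ g : Fin k → Fin n,
        Function.Injective g ∧ (∀ i, g i ∈ s) ∧ (M.submatrix id g).det ≠ 0} := by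
      intro s hs
      have hsu : s = Finset.univ := by
        rw [← Finset.card_eq_iff_eq_univ, Fintype.card_fin]
        exact hs
      obtain ⟨g, hg1, hg2⟩ := aux_exists_sub M hrank
      exact ⟨g, hg1, fun i => hsu ▸ Finset.mem_univ _, hg2⟩
    have hne : {ρ : ℕ | ∀ s : Finset (Fin n), s.card = ρ → ∃ g : Fin k → Fin n,
        Function.Injective g ∧ (∀ i, g i ∈ s) ∧ (M.submatrix id g).det ≠ 0}.Nonempty :=
      ⟨n, hnmem⟩
    have hmem := Nat.sInf_mem hne
    have hrhoeq : matDiameter M = sInf {ρ : ℕ | ∀ s : Finset (Fin n), s.card = ρ →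
        ∃ g : Fin k → Fin n, Function.Injective g ∧ (∀ i, g i ∈ s) ∧
        (M.submatrix id g).det ≠ 0} := rfl
    have hrho_le : matDiameter M ≤ n := by
      rw [hrhoeq]
      exact Nat.sInf_le hnmem
    intro X hX
    by_contra hlt
    push_neg at hlt
    set v : Fin n → F := vecMul X (M.map (eval a)) with hv
    have hnorm : hammingNorm v ≤ n - matDiameter M := Nat.lt_succ_iff.mp hlt
    set Z : Finset (Fin n) := Finset.univ.filter (fun j => v j = 0) with hZ
    have hcards : Z.card + hammingNorm v = n := by
      have h1 : hammingNorm v = (Finset.univ.filter (fun j => v j ≠ 0)).card := rfl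
      have h2 := Finset.card_filter_add_card_filter_not
        (s := (Finset.univ : Finset (Fin n))) (p := fun j => v j = 0)
      simp only [Finset.card_univ, Fintype.card_fin] at h2
      rw [h1, hZ]
      convert h2 using 2
    have hZcard : matDiameter M ≤ Z.card := by
      clear hlt
      revert hcards hnorm hrho_le
      generalize hammingNorm v = A
      generalize Z.card = B
      generalize matDiameter M = C
      intros h1 h2 h3
      have h4 : C + A ≤ n := by
        calc C + A ≤ C + (n - C) := Nat.add_le_add_left h2 C
          _ = n := Nat.add_sub_cancel' h1
      rw [← h3] at h4
      exact Nat.le_of_add_le_add_right h4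
    obtain ⟨s, hsZ, hscard⟩ := Finset.exists_subset_card_eq hZcard
    obtain ⟨g, hginj, hgmem, hgdet⟩ := hmem s (by rw [hscard]; exact hrhoeq)
    have hdet' : ((M.map (eval a)).submatrix id g).det ≠ 0 := (key g).mpr hgdet
    have hv0 : ∀ i, v (g i) = 0 := fun i => (Finset.mem_filter.mp (hsZ (hgmem i))).2
    have hvm : vecMul X ((M.map (eval a)).submatrix id g) = 0 := by
      funext j
      have h1 : vecMul X ((M.map (eval a)).submatrix id g) j = v (g j) := by
        simp [hv, Matrix.vecMul, dotProduct, Matrix.submatrix_apply]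
      rw [h1, hv0 j]
      rfl
    exact hdet' (Matrix.exists_vecMul_eq_zero_iff.mp ⟨X, hX, hvm⟩)
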